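/- Let α = (a₀,a₁,a₂,b₀,b₁,b₂) ∈ ℂ⁶ satisfy a₀ ≠ 0, a₁ ≠ 0, b₀ ≠ 0, b₁ ≠ 0 and a₁²·b₀³ = a₀²·b₁³. Then there exist A ∈ SL(4,ℂ) with A not a scalar matrix and A² a scalar matrix, and d ∈ ℂ with G_α∘A = d·G_α. (Every point of the quintic hypersurface a₁²b₀³ = a₀²b₁³ in the Luna slice with these coordinates nonzero parameterizes a cubic surface with an extra automorphism of order 2; this divisor is a component of the restriction of the Eckardt divisor to the Luna slice.) -/

import Mathlib

open MvPolynomial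

/-- The substitution action: (P∘A)(x) = P(A·x), i.e. xⱼ ↦ Σₖ Aⱼₖ·xₖ. -/
noncomputable def actM (A : Matrix (Fin 4) (Fin 4) ℂ) (P : MvPolynomial (Fin 4) ℂ) :
    MvPolynomial (Fin 4) ℂ :=
  MvPolynomial.aeval (fun j => ∑ k : Fin 4, MvPolynomial.C (A j k) * MvPolynomial.X k) P

/-- The family of cubic forms parameterizing the Luna slice at the 3A₂ cubic:
G_α = a₀x₀³ + a₁x₁³ + a₂x₂³ + b₀x₀²x₃ + b₁x₁²x₃ + b₂x₂²x₃ + x₀x₁x₂ + x₃³. -/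
noncomputable def lunaFamily (a b : Fin 3 → ℂ) : MvPolynomial (Fin 4) ℂ :=
  C (a 0) * X 0 ^ 3 + C (a 1) * X 1 ^ 3 + C (a 2) * X 2 ^ 3 +
  C (b 0) * X 0 ^ 2 * X 3 + C (b 1) * X 1 ^ 2 * X 3 + C (b 2) * X 2 ^ 2 * X 3 +
  X 0 * X 1 * X 2 + X 3 ^ 3

@[simp] lemma ofM_eq (M : Matrix (Fin 4) (Fin 4) ℂ) : Matrix.of M = M := rfl

/-- Every point of the quintic hypersurface a₁²b₀³ = a₀²b₁³ in the Luna slice with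
a₀, a₁, b₀, b₁ nonzero parameterizes a cubic surface with an extra automorphism of
order 2: there is a non-scalar A ∈ SL(4,ℂ) with A² scalar stabilizing G_α up to a
scalar. -/
theorem eckardt_divisor_in_luna_slice (a b : Fin 3 → ℂ)
    (ha0 : a 0 ≠ 0) (ha1 : a 1 ≠ 0) (hb0 : b 0 ≠ 0) (hb1 : b 1 ≠ 0)
    (hrel : (a 1) ^ 2 * (b 0) ^ 3 = (a 0) ^ 2 * (b 1) ^ 3) :
    ∃ A : Matrix.SpecialLinearGroup (Fin 4) ℂ,
      (¬∃ t : ℂ, (A : Matrix (Fin 4) (Fin 4) ℂ) = t • (1 : Matrix (Fin 4) (Fin 4) ℂ)) ∧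
      (∃ t : ℂ, (A : Matrix (Fin 4) (Fin 4) ℂ) * (A : Matrix (Fin 4) (Fin 4) ℂ) =
        t • (1 : Matrix (Fin 4) (Fin 4) ℂ)) ∧
      (∃ d : ℂ, actM (A : Matrix (Fin 4) (Fin 4) ℂ) (lunaFamily a b) =
        d • lunaFamily a b) := by
  obtain ⟨ν, l, m, d, hνne, hν4, hlm, hd, h0, h1, h3, h4⟩ :
      ∃ ν l m d : ℂ, ν ≠ 0 ∧ ν ^ 4 = -1 ∧ l * m = ν ^ 2 ∧ ν ^ 3 = d ∧
        a 1 * m ^ 3 = d * a 0 ∧ a 0 * l ^ 3 = d * a 1 ∧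
        b 1 * m ^ 2 * ν = d * b 0 ∧ b 0 * l ^ 2 * ν = d * b 1 := by
    obtain ⟨ν, hν4⟩ : ∃ z : ℂ, z ^ 4 = -1 := by
      refine ⟨(1 + Complex.I) / (Real.sqrt 2 : ℝ), ?_⟩
      have hsq2 : ((Real.sqrt 2 : ℝ) : ℂ) ^ 2 = 2 := by
        push_cast [← Complex.ofReal_pow, Real.sq_sqrt (by norm_num : (2:ℝ) ≥ 0)]
        norm_num
      have hsne : ((Real.sqrt 2 : ℝ) : ℂ) ≠ 0 := by
        intro h; rw [h] at hsq2; norm_num at hsq2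
      field_simp
      rw [show ((1:ℂ) + Complex.I) ^ 4 = (Complex.I ^ 2) ^ 2 + 4 * Complex.I ^ 2 *
        (1 + Complex.I) - 2 * Complex.I ^ 2 + 4 * Complex.I ^ 2 + 1 + 4 * Complex.I
        from by ring, Complex.I_sq,
        show ((Real.sqrt 2 : ℝ) : ℂ) ^ 4 = (((Real.sqrt 2 : ℝ) : ℂ) ^ 2) ^ 2 from by ring,
        hsq2]
      ring
    have hνne : ν ≠ 0 := by
      intro h; rw [h] at hν4; norm_num at hν4
    obtain ⟨s, hsne', hs3, hs2'⟩ :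
        ∃ s : ℂ, s ≠ 0 ∧ a 1 * s ^ 3 = a 0 ∧ b 1 * s ^ 2 = b 0 := by
      refine ⟨a 0 * b 1 / (a 1 * b 0),
        div_ne_zero (mul_ne_zero ha0 hb1) (mul_ne_zero ha1 hb0), ?_, ?_⟩
      · field_simp
        linear_combination (-1 : ℂ) * hrel
      · field_simp
        linear_combination (-1 : ℂ) * hrel
    refine ⟨ν, ν / s, ν * s, ν ^ 3, hνne, hν4, ?_, rfl, ?_, ?_, ?_, ?_⟩
    · field_simp
    · linear_combination ν ^ 3 * hs3
    · field_simp
      linear_combination (-1 : ℂ) * hs3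
    · linear_combination ν ^ 3 * hs2'
    · field_simp
      linear_combination (-1 : ℂ) * hs2'
  have hdet : (Matrix.of !![0, l, 0, 0; m, 0, 0, 0; 0, 0, ν, 0; 0, 0, 0, ν]).det = 1 := by
    simp [Matrix.det_succ_row_zero, Fin.sum_univ_succ, Fin.succAbove,
      Matrix.vecHead, Matrix.vecTail]
    linear_combination (-(ν ^ 2)) * hlm - hν4
  refine ⟨⟨Matrix.of !![0, l, 0, 0; m, 0, 0, 0; 0, 0, ν, 0; 0, 0, 0, ν], hdet⟩, ?_, ?_, ?_⟩
  · rintro ⟨t, ht⟩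
    have h00 : (0 : ℂ) = t := by
      have := congrFun (congrFun ht 0) 0
      simpa [Matrix.one_apply] using this
    have h22 : ν = t := by
      have := congrFun (congrFun ht 2) 2
      simpa [Matrix.one_apply] using this
    exact hνne (h22.trans h00.symm)
  · refine ⟨ν ^ 2, ?_⟩
    ext i j
    fin_cases i <;> fin_cases j <;>
      simp [Matrix.mul_apply, Fin.sum_univ_four, Matrix.one_apply,
        Matrix.vecHead, Matrix.vecTail] <;>
      first
      | exact Or.inr rfl
      | rfl
      | linear_combination hlm
      | linear_combination
  · refine ⟨d, ?_⟩
    have H0 : (C (a 1) : MvPolynomial (Fin 4) ℂ) * C m ^ 3 = C d * C (a 0) := by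
      rw [← C_pow, ← C_mul, ← C_mul, h0]
    have H1 : (C (a 0) : MvPolynomial (Fin 4) ℂ) * C l ^ 3 = C d * C (a 1) := by
      rw [← C_pow, ← C_mul, ← C_mul, h1]
    have H3 : (C (b 1) : MvPolynomial (Fin 4) ℂ) * C m ^ 2 * C ν = C d * C (b 0) := by
      rw [← C_pow, ← C_mul, ← C_mul, ← C_mul, h3]
    have H4 : (C (b 0) : MvPolynomial (Fin 4) ℂ) * C l ^ 2 * C ν = C d * C (b 1) := by
      rw [← C_pow, ← C_mul, ← C_mul, ← C_mul, h4]
    have Hlm : (C l : MvPolynomial (Fin 4) ℂ) * C m = C ν ^ 2 := by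
      rw [← C_pow, ← C_mul, hlm]
    have Hd : (C ν : MvPolynomial (Fin 4) ℂ) ^ 3 = C d := by
      rw [← C_pow, hd]
    rw [actM, lunaFamily]
    simp only [map_add, map_mul, map_pow, aeval_C, aeval_X, Fin.sum_univ_four,
      Matrix.of_apply, Matrix.cons_val', Matrix.cons_val_zero, Matrix.cons_val_one,
      Matrix.head_cons, Matrix.empty_val', Matrix.cons_val_fin_one, Matrix.head_fin_const,
      Matrix.cons_val_two, Matrix.tail_cons, Matrix.cons_val_three, map_zero, zero_mul,
      add_zero, zero_add, algebraMap_eq, smul_eq_C_mul, ofM_eq]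
    linear_combination (X 1 : MvPolynomial (Fin 4) ℂ) ^ 3 * H1 +
      (X 0 : MvPolynomial (Fin 4) ℂ) ^ 3 * H0 +
      (X 2 : MvPolynomial (Fin 4) ℂ) ^ 3 * C (a 2) * Hd +
      (X 1 : MvPolynomial (Fin 4) ℂ) ^ 2 * X 3 * H4 +
      (X 0 : MvPolynomial (Fin 4) ℂ) ^ 2 * X 3 * H3 +
      (X 2 : MvPolynomial (Fin 4) ℂ) ^ 2 * X 3 * C (b 2) * Hd +
      (X 0 * X 1 * X 2 : MvPolynomial (Fin 4) ℂ) * C ν * Hlm +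
      (X 0 * X 1 * X 2 : MvPolynomial (Fin 4) ℂ) * Hd +
      (X 3 : MvPolynomial (Fin 4) ℂ) ^ 3 * Hd
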